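/- Let (s_n)_{n≥1} be a sequence of natural numbers with s_n → ∞, and set s_0 := liminf_{n→∞} log(s_1⋯s_n) / (2 log(s_1⋯s_n) + log s_{n+1}). Then for every 0 < s < s_0 and every integer N ≥ 2 there exists n_0 such that for all n ≥ n_0: (s_{n+1} · (∏_{k=1}^n N s_k)^2)^s ≤ ∏_{k=1}^n (N−1) s_k. -/

import Mathlib

open Filter

/-- With s0 the liminf of log(s_1⋯s_n)/(2 log(s_1⋯s_n) + log s_{n+1}),
for every 0 < s < s0 and integer N ≥ 2 there is n₀ such that for all n ≥ n₀,
(s_{n+1} (∏_{k=1}^n N s_k)²)^s ≤ ∏_{k=1}^n (N−1) s_k. -/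
theorem exists_n0_rpow_le (s : ℕ → ℕ) (hpos : ∀ n, 1 ≤ s n)
    (hs : Tendsto s atTop atTop) (s0 : ℝ)
    (hs0 : s0 = liminf (fun n : ℕ =>
      Real.log (∏ k ∈ Finset.Icc 1 n, (s k : ℝ)) /
        (2 * Real.log (∏ k ∈ Finset.Icc 1 n, (s k : ℝ)) + Real.log (s (n + 1))))
      atTop) :
    ∀ t : ℝ, 0 < t → t < s0 → ∀ N : ℕ, 2 ≤ N →
      ∃ n₀ : ℕ, ∀ n ≥ n₀,
        ((s (n + 1) : ℝ) * (∏ k ∈ Finset.Icc 1 n, ((N : ℝ) * s k)) ^ 2) ^ t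
          ≤ ∏ k ∈ Finset.Icc 1 n, (((N : ℝ) - 1) * s k) := by
  intro t ht hts0 N hN
  have hsk1 : ∀ k, (1:ℝ) ≤ (s k : ℝ) := fun k => by exact_mod_cast hpos k
  have hskpos : ∀ k, (0:ℝ) < (s k : ℝ) := fun k => lt_of_lt_of_le one_pos (hsk1 k)
  set L : ℕ → ℝ := fun n => Real.log (∏ k ∈ Finset.Icc 1 n, (s k : ℝ)) with hLdef
  have hP1 : ∀ n, (1:ℝ) ≤ ∏ k ∈ Finset.Icc 1 n, (s k : ℝ) := fun n => by
    simpa using Finset.prod_le_prod (f := fun _ : ℕ => (1:ℝ))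
      (g := fun k => (s k : ℝ)) (fun i _ => zero_le_one) (fun i _ => hsk1 i)
  have hLnn : ∀ n, 0 ≤ L n := fun n => Real.log_nonneg (hP1 n)
  have ha : ∀ n, 0 ≤ Real.log (s (n+1)) := fun n => Real.log_nonneg (hsk1 _)
  have hLsum : ∀ n, L n = ∑ k ∈ Finset.Icc 1 n, Real.log (s k) := fun n =>
    Real.log_prod (fun k _ => ne_of_gt (hskpos k))
  -- pick t' between t and s0
  set t' : ℝ := (t + s0)/2 with ht'def
  have htt' : t < t' := by simp only [ht'def]; linarith
  have ht's0 : t' < s0 := by simp only [ht'def]; linarith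
  have ht'pos : 0 < t' := lt_trans ht htt'
  -- the ratio is bounded below
  have hbdd : IsBoundedUnder (· ≥ ·) atTop
      (fun n : ℕ => L n / (2 * L n + Real.log (s (n+1)))) :=
    isBoundedUnder_of ⟨0, fun n =>
      div_nonneg (hLnn n) (by nlinarith [hLnn n, ha n])⟩
  have E1 : ∀ᶠ n in atTop, t' < L n / (2 * L n + Real.log (s (n+1))) := by
    apply eventually_lt_of_lt_liminf _ hbdd
    rw [← hs0]; exact ht's0
  -- growth: eventually c * n ≤ L n
  have hε : 0 < 1 - t/t' := by
    have : t/t' < 1 := (div_lt_one ht'pos).mpr htt'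
    linarith
  set c : ℝ := 2 * t * Real.log N / (1 - t/t') with hcdef
  have hlogN : 0 ≤ Real.log N := Real.log_nonneg (by exact_mod_cast hN.trans' (by norm_num))
  have hc : 0 ≤ c := div_nonneg (by positivity) hε.le
  have E2 : ∀ᶠ n in atTop, c * n ≤ L n := by
    set M : ℕ := ⌈Real.exp (2*c)⌉₊ with hMdef
    have hM : 2*c ≤ Real.log M := by
      have h1 : Real.exp (2*c) ≤ (M:ℝ) := Nat.le_ceil _
      have h2 : (0:ℝ) < Real.exp (2*c) := Real.exp_pos _
      calc 2*c = Real.log (Real.exp (2*c)) := (Real.log_exp _).symm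
        _ ≤ Real.log M := Real.log_le_log h2 h1
    obtain ⟨K₀, hK₀⟩ := (hs.eventually_ge_atTop M).exists_forall_of_atTop
    set K : ℕ := max K₀ 1 with hKdef
    have hK1 : 1 ≤ K := le_max_right _ _
    have hKM : ∀ k ≥ K, (M:ℝ) ≤ (s k : ℝ) := fun k hk => by
      exact_mod_cast hK₀ k (le_trans (le_max_left _ _) hk)
    filter_upwards [eventually_ge_atTop (2*K)] with n hn
    have hKn : K ≤ n := le_trans (by omega) hn
    have hsub : Finset.Icc K n ⊆ Finset.Icc 1 n := Finset.Icc_subset_Icc hK1 le_rfl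
    have h1 : ∑ k ∈ Finset.Icc K n, Real.log (s k) ≤ L n := by
      rw [hLsum]
      exact Finset.sum_le_sum_of_subset_of_nonneg hsub
        (fun k _ _ => Real.log_nonneg (hsk1 k))
    have h2 : ((n + 1 - K : ℕ) : ℝ) * (2*c) ≤ ∑ k ∈ Finset.Icc K n, Real.log (s k) := by
      have := Finset.sum_le_sum (f := fun _ : ℕ => 2*c)
        (g := fun k => Real.log (s k)) (s := Finset.Icc K n)
        (fun k hk => le_trans hM (Real.log_le_log (by positivity)
          (hKM k (Finset.mem_Icc.mp hk).1)))
      simpa [Finset.sum_const, Nat.card_Icc, mul_comm] using this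
    have hcast : ((n + 1 - K : ℕ) : ℝ) = (n:ℝ) + 1 - K := by
      have : K ≤ n + 1 := by omega
      push_cast [Nat.cast_sub this]; ring
    have hnK : (n:ℝ) ≥ 2*K := by exact_mod_cast hn
    nlinarith [h1, h2, hc]
  -- combine
  obtain ⟨n₀, hn₀⟩ := (E1.and E2).exists_forall_of_atTop
  refine ⟨n₀, fun n hn => ?_⟩
  obtain ⟨h1, h2⟩ := hn₀ n hn
  set a : ℝ := Real.log (s (n+1)) with hadef
  set D : ℝ := 2 * L n + a with hDdef
  have hDnn : 0 ≤ D := by simp only [hDdef]; nlinarith [hLnn n, ha n]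
  have hD : 0 < D := by
    rcases lt_or_eq_of_le hDnn with h | h
    · exact h
    · exfalso; rw [← h] at h1; simp at h1; linarith
  have ht'D : t' * D < L n := (lt_div_iff₀ hD).mp h1
  have htD : t * D ≤ (t/t') * L n := by
    have : t * D = (t/t') * (t' * D) := by field_simp
    rw [this]
    exact mul_le_mul_of_nonneg_left ht'D.le (by positivity)
  -- rewrite products
  have hcard : (Finset.Icc 1 n).card = n := by rw [Nat.card_Icc]; omega
  set P : ℝ := ∏ k ∈ Finset.Icc 1 n, (s k : ℝ) with hPdef
  have hPpos : 0 < P := lt_of_lt_of_le one_pos (hP1 n)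
  have hprodN : ∏ k ∈ Finset.Icc 1 n, ((N : ℝ) * s k) = (N:ℝ)^n * P := by
    rw [Finset.prod_mul_distrib, Finset.prod_const, hcard]
  have hN1 : (1:ℝ) ≤ (N:ℝ) - 1 := by
    have : (2:ℝ) ≤ N := by exact_mod_cast hN
    linarith
  have hprodN1 : ∏ k ∈ Finset.Icc 1 n, (((N : ℝ) - 1) * s k) = ((N:ℝ)-1)^n * P := by
    rw [Finset.prod_mul_distrib, Finset.prod_const, hcard]
  rw [hprodN, hprodN1]
  have hNpos : (0:ℝ) < N := by positivity
  have hXpos : (0:ℝ) < (s (n+1) : ℝ) * ((N:ℝ)^n * P)^2 :=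
    mul_pos (hskpos _) (pow_pos (mul_pos (pow_pos hNpos n) hPpos) 2)
  have hYpos : (0:ℝ) < ((N:ℝ)-1)^n * P :=
    mul_pos (pow_pos (lt_of_lt_of_le one_pos hN1) n) hPpos
  rw [Real.rpow_def_of_pos hXpos, ← Real.exp_log hYpos, Real.exp_le_exp]
  have hlogX : Real.log ((s (n+1) : ℝ) * ((N:ℝ)^n * P)^2)
      = a + 2 * (n * Real.log N + L n) := by
    rw [Real.log_mul (ne_of_gt (hskpos _)) (ne_of_gt (pow_pos (mul_pos (pow_pos hNpos n) hPpos) 2)),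
      Real.log_pow, Real.log_mul (ne_of_gt (pow_pos hNpos n)) (ne_of_gt hPpos), Real.log_pow]
    push_cast
    try simp only [hadef, hLdef, hPdef]
    try ring
  have hlogY : Real.log (((N:ℝ)-1)^n * P) = n * Real.log ((N:ℝ)-1) + L n := by
    rw [Real.log_mul (ne_of_gt (pow_pos (lt_of_lt_of_le one_pos hN1) n)) (ne_of_gt hPpos),
      Real.log_pow]
  rw [hlogX, hlogY]
  have hlogN1 : 0 ≤ Real.log ((N:ℝ)-1) := Real.log_nonneg hN1
  -- key arithmetic
  have hεc : (1 - t/t') * c = 2 * t * Real.log N := by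
    rw [hcdef, mul_comm, div_mul_cancel₀ _ hε.ne']
  have hnn : (0:ℝ) ≤ n := Nat.cast_nonneg n
  have hA : t * (2 * L n + a) ≤ (t/t') * L n := by rw [hDdef] at htD; exact htD
  have hB : 2 * t * Real.log N * n ≤ (1 - t/t') * L n := by
    calc 2 * t * Real.log N * n = (1 - t/t') * (c * n) := by rw [← hεc]; ring
      _ ≤ (1 - t/t') * L n := mul_le_mul_of_nonneg_left h2 hε.le
  have hC : 0 ≤ (n:ℝ) * Real.log ((N:ℝ)-1) := mul_nonneg hnn hlogN1
  linarith [hA, hB, hC]
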